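/- Let S be a maximal common independent set of matroids M1, M2, and let D2 ⊆ S be the set of elements at distance 2 from s in the exchange graph G(S). For u ∈ S: u ∈ D2 if and only if rank_{M2}(S + D1 − u) ≥ rank_{M2}(S), where D1 = {v ∈ V∖S : S + v ∈ I1}. -/

import Mathlib

open Set

variable {α : Type*}

/-- Vertices of the exchange graph: `Sum.inl v` is an element of the ground set,
`Sum.inr false` is the source `s`, `Sum.inr true` is the sink `t`. -/
abbrev ExV (α : Type*) := α ⊕ Bool

/-- Adjacency in the exchange graph `G(S)` of the common independent set `S`. -/
def exAdj (M₁ M₂ : Matroid α) (S : Set α) : ExV α → ExV α → Prop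
  | Sum.inl u, Sum.inl v =>
      (u ∈ S ∧ v ∉ S ∧ M₁.Indep (insert v (S \ {u}))) ∨
      (u ∉ S ∧ v ∈ S ∧ M₂.Indep (insert u (S \ {v})))
  | Sum.inr false, Sum.inl v => v ∉ S ∧ M₁.Indep (insert v S)
  | Sum.inl v, Sum.inr true => v ∉ S ∧ M₂.Indep (insert v S)
  | _, _ => False

/-- `l` is an `(s,t)`-path (list of vertices) in the exchange graph `G(S)`.
Its length (number of edges) is `l.length - 1`. -/
def IsSTPath (M₁ M₂ : Matroid α) (S : Set α) (l : List (ExV α)) : Prop :=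
  l.Chain' (exAdj M₁ M₂ S) ∧ l.head? = some (Sum.inr false) ∧
    l.getLast? = some (Sum.inr true)

/-- `l` is a path from `s` to the element `v` in the exchange graph `G(S)`. -/
def IsSPathTo (M₁ M₂ : Matroid α) (S : Set α) (v : α) (l : List (ExV α)) : Prop :=
  l.Chain' (exAdj M₁ M₂ S) ∧ l.head? = some (Sum.inr false) ∧
    l.getLast? = some (Sum.inl v)

/-- `v` is at distance exactly `i` from `s` in the exchange graph `G(S)`;
i.e. `v ∈ D_i`. -/
def InLayer (M₁ M₂ : Matroid α) (S : Set α) (i : ℕ) (v : α) : Prop :=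
  (∃ l, IsSPathTo M₁ M₂ S v l ∧ l.length = i + 1) ∧
    ∀ l, IsSPathTo M₁ M₂ S v l → i + 1 ≤ l.length

/-- Shortest `(s,t)`-paths in `G(S)` have length exactly `4`. -/
def ShortestAugLenFour (M₁ M₂ : Matroid α) (S : Set α) : Prop :=
  (∃ l, IsSTPath M₁ M₂ S l ∧ l.length = 5) ∧
    ∀ l, IsSTPath M₁ M₂ S l → 5 ≤ l.length

/-- `(B₁, A₁, B₂)` is an augmenting set in `G(S)`. -/
def IsAugSet (M₁ M₂ : Matroid α) (S B₁ A₁ B₂ : Set α) : Prop :=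
  (∀ v ∈ B₁, InLayer M₁ M₂ S 1 v) ∧ (∀ v ∈ A₁, InLayer M₁ M₂ S 2 v) ∧
  (∀ v ∈ B₂, InLayer M₁ M₂ S 3 v) ∧
  B₁.ncard = A₁.ncard ∧ A₁.ncard = B₂.ncard ∧
  M₁.Indep (S ∪ B₁) ∧ M₂.Indep ((S ∪ B₁) \ A₁) ∧
  M₁.Indep ((S \ A₁) ∪ B₂) ∧ M₂.Indep (S ∪ B₂)

/-- The rank of a set `X` in a matroid `M`: the maximum size of an independent
subset of `X`. -/
noncomputable def mRank (M : Matroid α) (X : Set α) : ℕ :=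
  sSup {n | ∃ I, I ⊆ X ∧ M.Indep I ∧ I.ncard = n}


lemma layer2_iff_aux (M₁ M₂ : Matroid α) (S : Set α) (u : α) (hu : u ∈ S) :
    InLayer M₁ M₂ S 2 u ↔
      ∃ v, v ∉ S ∧ M₁.Indep (insert v S) ∧ M₂.Indep (insert v (S \ {u})) := by
  constructor
  · rintro ⟨⟨l, ⟨hch, hh, hl⟩, hlen⟩, -⟩
    match l, hlen with
    | [a, b, c], _ =>
      simp only [List.head?, List.getLast?, Option.some_inj] at hh hl
      subst hh hl
      rw [List.Chain', List.isChain_cons_cons, List.isChain_cons_cons] at hch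
      obtain ⟨h1, h2, -⟩ := hch
      match b with
      | Sum.inl v =>
        simp only [exAdj] at h1 h2
        rcases h2 with ⟨hv, -⟩ | ⟨hv, -, hind⟩
        · exact absurd hv h1.1
        · exact ⟨v, h1.1, h1.2, hind⟩
      | Sum.inr bb => cases bb <;> simp [exAdj] at h1
  · rintro ⟨v, hv, h1, h2⟩
    constructor
    · refine ⟨[Sum.inr false, Sum.inl v, Sum.inl u], ⟨?_, rfl, rfl⟩, rfl⟩
      rw [List.Chain', List.isChain_cons_cons, List.isChain_cons_cons]
      exact ⟨⟨hv, h1⟩, Or.inr ⟨hv, hu, h2⟩, List.isChain_singleton _⟩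
    · rintro l ⟨hch, hh, hl⟩
      match l with
      | [] => simp at hh
      | [a] =>
        simp only [List.head?, List.getLast?, Option.some_inj] at hh hl
        rw [hh] at hl; simp at hl
      | [a, b] =>
        simp only [List.head?, List.getLast?, Option.some_inj] at hh hl
        subst hh hl
        rw [List.Chain', List.isChain_cons_cons] at hch
        exact absurd hch.1.1 (not_not_intro hu)
      | a :: b :: c :: l => simp [List.length]

/-- For a maximal common independent set `S` and `u ∈ S`: `u` is at distance `2`
from `s` in `G(S)` iff `rank_{M₂}(S + D₁ - u) ≥ rank_{M₂}(S)`, where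
`D₁ = {v ∉ S : S + v ∈ I₁}`. -/
theorem layer_two_rank_characterization {α : Type*} (M₁ M₂ : Matroid α)
    (hE : M₂.E = M₁.E) (hfin : M₁.E.Finite)
    (S : Set α) (hS₁ : M₁.Indep S) (hS₂ : M₂.Indep S)
    (hSmax : ∀ v, M₁.Indep (insert v S) → M₂.Indep (insert v S) → v ∈ S)
    (u : α) (hu : u ∈ S) :
    InLayer M₁ M₂ S 2 u ↔
      mRank M₂ S ≤ mRank M₂ ((S \ {u}) ∪ {v | v ∉ S ∧ M₁.Indep (insert v S)}) := by
  
  rw [layer2_iff_aux M₁ M₂ S u hu]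
  set D₁ : Set α := {v | v ∉ S ∧ M₁.Indep (insert v S)} with hD₁
  set X := (S \ {u}) ∪ D₁ with hX
  have hSfin : S.Finite := hfin.subset (hE ▸ hS₂.subset_ground)
  have hXfin : X.Finite := by
    apply hfin.subset
    rintro x (⟨hx, -⟩ | ⟨-, hind⟩)
    · exact hE ▸ hS₂.subset_ground hx
    · exact hind.subset_ground (mem_insert _ _)
  have hbddX : BddAbove {n | ∃ I, I ⊆ X ∧ M₂.Indep I ∧ I.ncard = n} := by
    refine ⟨X.ncard, ?_⟩
    rintro n ⟨I, hIX, -, rfl⟩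
    exact ncard_le_ncard hIX hXfin
  have hrS : mRank M₂ S = S.ncard := by
    apply le_antisymm
    · refine csSup_le ⟨0, ∅, empty_subset _, M₂.empty_indep, ncard_empty _⟩ ?_
      rintro n ⟨I, hIS, -, rfl⟩
      exact ncard_le_ncard hIS hSfin
    · refine le_csSup ?_ ⟨S, subset_rfl, hS₂, rfl⟩
      refine ⟨S.ncard, ?_⟩
      rintro n ⟨I, hIS, -, rfl⟩
      exact ncard_le_ncard hIS hSfin
  rw [hrS]
  constructor
  · rintro ⟨v, hv, h1, h2⟩
    refine le_csSup hbddX ⟨insert v (S \ {u}), ?_, h2, ?_⟩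
    · exact insert_subset (mem_union_right _ ⟨hv, h1⟩) subset_union_left
    · rw [ncard_insert_of_notMem (fun h => hv h.1) hSfin.diff,
        ncard_diff_singleton_add_one hu hSfin]
  · intro h
    have hmem : mRank M₂ X ∈ {n | ∃ I, I ⊆ X ∧ M₂.Indep I ∧ I.ncard = n} :=
      Nat.sSup_mem ⟨0, ∅, empty_subset _, M₂.empty_indep, ncard_empty _⟩ hbddX
    obtain ⟨I, hIX, hI, hIcard⟩ := hmem
    have hSu : M₂.Indep (S \ {u}) := hS₂.subset diff_subset
    have hlt : (S \ {u}).encard < I.encard := by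
      rw [← hSfin.diff.cast_ncard_eq, ← (hXfin.subset hIX).cast_ncard_eq,
        Nat.cast_lt, hIcard]
      have h1 : (S \ {u}).ncard + 1 = S.ncard := ncard_diff_singleton_add_one hu hSfin
      omega
    obtain ⟨w, hw, hwind⟩ := hSu.augment hI hlt
    obtain ⟨hwI, hwSu⟩ := hw
    rcases hIX hwI with h' | ⟨hws, hwind1⟩
    · exact absurd h' hwSu
    · exact ⟨w, hws, hwind1, hwind⟩
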